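/- Let F : T → c(M) with V⁺(F,T) < +∞, and let t ∈ T be a right limit point of T. Then v⁺(t+0) = v⁺(t) + limsup_{T ∋ s → t+0} e(F(t),F(s)), where v⁺(t) := V⁺(F, T∩(-∞,t]) and v⁺(t+0) is its right limit along T. -/

import Mathlib

open Set Metric EMetric Filter
open scoped ENNReal Pointwise

noncomputable def exc {M : Type*} [MetricSpace M] (X Y : Set M) : ℝ≥0∞ :=
  ⨆ x ∈ X, EMetric.infEdist x Y

noncomputable def varBy {M : Type*} [MetricSpace M]
    (D : Set M → Set M → ℝ≥0∞) (F : ℝ → Set M) (T : Set ℝ) : ℝ≥0∞ :=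
  ⨆ p : {p : ℕ × (ℕ → ℝ) // Monotone p.2 ∧ ∀ i, p.2 i ∈ T},
    ∑ i ∈ Finset.range p.1.1, D (F (p.1.2 i)) (F (p.1.2 (i + 1)))

noncomputable def varPlus {M : Type*} [MetricSpace M] (F : ℝ → Set M) (T : Set ℝ) : ℝ≥0∞ :=
  varBy exc F T

noncomputable def varMinus {M : Type*} [MetricSpace M] (F : ℝ → Set M) (T : Set ℝ) : ℝ≥0∞ :=
  varBy (fun X Y => exc Y X) F T

noncomputable def varH {M : Type*} [MetricSpace M] (F : ℝ → Set M) (T : Set ℝ) : ℝ≥0∞ :=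
  varBy EMetric.hausdorffEdist F T

section Lemmas

variable {M : Type*} [MetricSpace M]

lemma exc_self (X : Set M) : exc X X = 0 := by
  refine le_antisymm (iSup₂_le fun x hx => ?_) zero_le
  exact (infEdist_zero_of_mem hx).le

lemma exc_triangle (X Y Z : Set M) : exc X Z ≤ exc X Y + exc Y Z := by
  refine iSup₂_le fun x hx => ?_
  have h1 : infEdist x Z - exc Y Z ≤ infEdist x Y := by
    refine le_infEdist.2 ?_
    intro y hy
    rw [tsub_le_iff_right]
    refine infEdist_le_edist_add_infEdist.trans (add_le_add_right ?_ _)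
    exact le_iSup₂ (f := fun y (_ : y ∈ Y) => infEdist y Z) y hy
  calc infEdist x Z ≤ (infEdist x Z - exc Y Z) + exc Y Z := le_tsub_add
    _ ≤ infEdist x Y + exc Y Z := add_le_add_left h1 _
    _ ≤ exc X Y + exc Y Z :=
        add_le_add_left (le_iSup₂ (f := fun x (_ : x ∈ X) => infEdist x Y) x hx) _

lemma sum_le_varPlus {F : ℝ → Set M} {S : Set ℝ} {f : ℕ → ℝ} (hf : Monotone f)
    (hmem : ∀ i, f i ∈ S) (n : ℕ) :
    ∑ i ∈ Finset.range n, exc (F (f i)) (F (f (i + 1))) ≤ varPlus F S :=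
  le_iSup (fun p : {p : ℕ × (ℕ → ℝ) // Monotone p.2 ∧ ∀ i, p.2 i ∈ S} =>
      ∑ i ∈ Finset.range p.1.1, exc (F (p.1.2 i)) (F (p.1.2 (i + 1))))
    ⟨(n, f), hf, hmem⟩

lemma varPlus_mono {F : ℝ → Set M} {S₁ S₂ : Set ℝ} (h : S₁ ⊆ S₂) :
    varPlus F S₁ ≤ varPlus F S₂ := by
  refine iSup_le fun p => ?_
  exact sum_le_varPlus p.2.1 (fun i => h (p.2.2 i)) p.1.1

/-- Prepend: `varPlus` on `T ∩ Iic (f 0)` plus a partition sum starting at `f 0`. -/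
lemma varPlus_prepend {F : ℝ → Set M} {T : Set ℝ} {f : ℕ → ℝ} (hf : Monotone f)
    (hmem : ∀ i, f i ∈ T) (n : ℕ) :
    varPlus F (T ∩ Iic (f 0)) + ∑ i ∈ Finset.range n, exc (F (f i)) (F (f (i + 1)))
      ≤ varPlus F (T ∩ Iic (f n)) := by
  have hne : Nonempty {p : ℕ × (ℕ → ℝ) // Monotone p.2 ∧ ∀ i, p.2 i ∈ T ∩ Iic (f 0)} :=
    ⟨⟨(0, fun _ => f 0), monotone_const, fun _ => ⟨hmem 0, mem_Iic.2 le_rfl⟩⟩⟩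
  rw [varPlus, varBy, ENNReal.iSup_add]
  refine iSup_le ?_
  rintro ⟨⟨m, g⟩, hg, hgmem⟩
  dsimp only
  set h : ℕ → ℝ := fun i => if i ≤ m then g i else f (min (i - (m + 1)) n) with hh
  have hgm : ∀ i, g i ∈ T ∧ g i ≤ f 0 := fun i => ⟨(hgmem i).1, (hgmem i).2⟩
  have hhmono : Monotone h := by
    intro i j hij
    by_cases hi : i ≤ m <;> by_cases hj : j ≤ m <;> simp only [hh, hi, hj, if_pos, if_neg,
      if_true, if_false]
    · exact hg hij
    · exact ((hgm i).2.trans (hf (Nat.zero_le _))).trans (le_refl _) |>.trans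
        (hf (le_refl _)) |>.trans (le_refl _)
    · omega
    · exact hf (min_le_min (by omega) le_rfl)
  have hhmem : ∀ i, h i ∈ T ∩ Iic (f n) := by
    intro i
    by_cases hi : i ≤ m <;> simp only [hh, hi, if_pos, if_neg, if_true, if_false]
    · exact ⟨(hgm i).1, (hgm i).2.trans (hf (Nat.zero_le n))⟩
    · exact ⟨hmem _, hf (min_le_right _ n)⟩
  calc (∑ i ∈ Finset.range m, exc (F (g i)) (F (g (i + 1)))) +
        ∑ i ∈ Finset.range n, exc (F (f i)) (F (f (i + 1)))
      ≤ ∑ i ∈ Finset.range (m + 1 + n), exc (F (h i)) (F (h (i + 1))) := by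
        rw [Finset.sum_range_add, Finset.sum_range_succ]
        refine add_le_add (le_add_of_le_of_nonneg (le_of_eq ?_) zero_le) (le_of_eq ?_)
        · refine Finset.sum_congr rfl fun i hi => ?_
          have hi' := Finset.mem_range.1 hi
          have h1 : h i = g i := by simp [hh, Nat.le_of_lt (Nat.lt_of_lt_of_le hi' (Nat.le_refl m)) |>.trans (le_refl m)]
          have h2 : h (i + 1) = g (i + 1) := by simp [hh, Nat.succ_le_of_lt hi']
          rw [h1, h2]
        · refine Finset.sum_congr rfl fun i hi => ?_
          have hi' := Finset.mem_range.1 hi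
          have h1 : h (m + 1 + i) = f i := by
            simp only [hh, if_neg (by omega : ¬ m + 1 + i ≤ m)]
            congr 1
            omega
          have h2 : h (m + 1 + i + 1) = f (i + 1) := by
            simp only [hh, if_neg (by omega : ¬ m + 1 + i + 1 ≤ m)]
            congr 1
            omega
          rw [h1, h2]
    _ ≤ varPlus F (T ∩ Iic (f n)) := sum_le_varPlus hhmono hhmem _

end Lemmas

section Lemmas2

variable {M : Type*} [MetricSpace M]

lemma mem_of_min {T : Set ℝ} {a b : ℝ} (ha : a ∈ T) (hb : b ∈ T) : min a b ∈ T := by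
  rcases le_total a b with h | h
  · rwa [min_eq_left h]
  · rwa [min_eq_right h]

lemma mem_of_max {T : Set ℝ} {a b : ℝ} (ha : a ∈ T) (hb : b ∈ T) : max a b ∈ T := by
  rcases le_total a b with h | h
  · rwa [max_eq_right h]
  · rwa [max_eq_left h]

/-- Splitting a variation on `T ∩ Iic u` at an interior point `t`. -/
lemma varPlus_split {F : ℝ → Set M} {T : Set ℝ} {t u : ℝ} (ht : t ∈ T) (htu : t ≤ u) :
    varPlus F (T ∩ Iic u) ≤ varPlus F (T ∩ Iic t) + varPlus F (T ∩ Icc t u) := by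
  rw [varPlus, varBy]
  refine iSup_le ?_
  rintro ⟨⟨n, f⟩, hf, hmem⟩
  dsimp only
  have key : ∀ i, exc (F (f i)) (F (f (i + 1))) ≤
      exc (F (min (f i) t)) (F (min (f (i + 1)) t)) +
      exc (F (max (f i) t)) (F (max (f (i + 1)) t)) := by
    intro i
    have hab : f i ≤ f (i + 1) := hf (Nat.le_succ i)
    rcases le_total t (f i) with h | h
    · rw [min_eq_right h, min_eq_right (h.trans hab), exc_self, zero_add,
        max_eq_left h, max_eq_left (h.trans hab)]
    · rcases le_total (f (i + 1)) t with h' | h'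
      · rw [min_eq_left h, min_eq_left h', max_eq_right h, max_eq_right h', exc_self, add_zero]
      · rw [min_eq_left h, min_eq_right h', max_eq_right h, max_eq_left h']
        exact exc_triangle _ _ _
  calc ∑ i ∈ Finset.range n, exc (F (f i)) (F (f (i + 1)))
      ≤ ∑ i ∈ Finset.range n, (exc (F (min (f i) t)) (F (min (f (i + 1)) t)) +
          exc (F (max (f i) t)) (F (max (f (i + 1)) t))) :=
        Finset.sum_le_sum fun i _ => key i
    _ = (∑ i ∈ Finset.range n, exc (F (min (f i) t)) (F (min (f (i + 1)) t))) +
          ∑ i ∈ Finset.range n, exc (F (max (f i) t)) (F (max (f (i + 1)) t)) :=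
        Finset.sum_add_distrib
    _ ≤ varPlus F (T ∩ Iic t) + varPlus F (T ∩ Icc t u) := by
        refine add_le_add (sum_le_varPlus ?_ ?_ n) (sum_le_varPlus ?_ ?_ n)
        · exact fun a b hab => min_le_min (hf hab) le_rfl
        · exact fun i => ⟨mem_of_min (hmem i).1 ht, mem_Iic.2 (min_le_right _ _)⟩
        · exact fun a b hab => max_le_max (hf hab) le_rfl
        · exact fun i => ⟨mem_of_max (hmem i).1 ht,
            ⟨le_max_right _ _, max_le (hmem i).2 htu⟩⟩

/-- Peeling the first jump off a variation on `T ∩ Icc t u`. -/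
lemma varPlus_icc_split {F : ℝ → Set M} {T : Set ℝ} {t u : ℝ} :
    varPlus F (T ∩ Icc t u) ≤
      (⨆ s ∈ T ∩ Ioc t u, exc (F t) (F s)) + varPlus F (T ∩ Ioc t u) := by
  rw [varPlus, varBy]
  refine iSup_le ?_
  rintro ⟨⟨n, f⟩, hf, hmem⟩
  dsimp only
  set E := ⨆ s ∈ T ∩ Ioc t u, exc (F t) (F s) with hE
  by_cases hS : ∃ i, i ≤ n ∧ t < f i
  · have hspec := Nat.find_spec hS
    have hmin := fun i (hi : i < Nat.find hS) => Nat.find_min hS hi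
    set j := Nat.find hS with hj
    clear_value j
    obtain ⟨hjn, hjt⟩ := hspec
    have hjmin : ∀ i < j, f i = t := by
      intro i hi
      have h1 := hmin i hi
      push_neg at h1
      exact le_antisymm (h1 (le_trans hi.le hjn)) (hmem i).2.1
    have hmem' : ∀ i, j ≤ i → f i ∈ T ∩ Ioc t u :=
      fun i hi => ⟨(hmem i).1, lt_of_lt_of_le hjt (hf hi), (hmem i).2.2⟩
    have hsum : ∑ i ∈ Finset.range n, exc (F (f i)) (F (f (i + 1))) =
        (∑ i ∈ Finset.range j, exc (F (f i)) (F (f (i + 1)))) +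
        ∑ i ∈ Finset.Ico j n, exc (F (f i)) (F (f (i + 1))) := by
      rw [Finset.range_eq_Ico, ← Finset.sum_Ico_consecutive _ (Nat.zero_le j) hjn,
        ← Finset.range_eq_Ico]
    rw [hsum]
    refine add_le_add ?_ ?_
    · -- prefix sum ≤ E
      rcases Nat.eq_zero_or_pos j with hj0 | hj0
      · simp [hj0]
      · obtain ⟨k, rfl⟩ : ∃ k, j = k + 1 := ⟨j - 1, by omega⟩
        rw [Finset.sum_range_succ]
        have h0 : ∑ i ∈ Finset.range k, exc (F (f i)) (F (f (i + 1))) = 0 := by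
          refine Finset.sum_eq_zero fun i hi => ?_
          have hi' := Finset.mem_range.1 hi
          rw [hjmin i (by omega), hjmin (i + 1) (by omega), exc_self]
        rw [h0, zero_add, hjmin k (by omega)]
        exact le_iSup₂ (f := fun s (_ : s ∈ T ∩ Ioc t u) => exc (F t) (F s)) (f (k + 1))
          (hmem' (k + 1) le_rfl)
    · -- suffix sum ≤ varPlus on Ioc
      rw [Finset.sum_Ico_eq_sum_range]
      have heq : ∀ i, j + i + 1 = j + (i + 1) := fun i => by omega
      calc ∑ i ∈ Finset.range (n - j), exc (F (f (j + i))) (F (f (j + i + 1)))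
          = ∑ i ∈ Finset.range (n - j), exc (F (f (j + i))) (F (f (j + (i + 1)))) := by
            refine Finset.sum_congr rfl fun i _ => by rw [heq]
        _ ≤ varPlus F (T ∩ Ioc t u) :=
            sum_le_varPlus (fun a b hab => hf (by omega))
              (fun i => hmem' (j + i) (by omega)) _
  · push_neg at hS
    have hall : ∀ i ≤ n, f i = t := fun i hi => le_antisymm (hS i hi) (hmem i).2.1
    have h0 : ∑ i ∈ Finset.range n, exc (F (f i)) (F (f (i + 1))) = 0 := by
      refine Finset.sum_eq_zero fun i hi => ?_
      have hi' := Finset.mem_range.1 hi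
      rw [hall i (by omega), hall (i + 1) (by omega), exc_self]
    rw [h0]
    exact zero_le

/-- `c + limsup f ≤ limsup (c + f)` in `ℝ≥0∞`. -/
lemma add_limsup_le_limsup_add {α : Type*} {l : Filter α} [hl : l.NeBot] (c : ℝ≥0∞)
    (f : α → ℝ≥0∞) :
    c + Filter.limsup f l ≤ Filter.limsup (fun s => c + f s) l := by
  refine le_of_forall_gt_imp_ge_of_dense fun b hb => ?_
  have hev : ∀ᶠ s in l, c + f s < b := Filter.eventually_lt_of_limsup_lt hb
  have hcb : c ≤ b := by
    obtain ⟨s, hs⟩ := hev.exists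
    exact (le_add_right le_rfl).trans hs.le
  have hc : c ≠ ∞ := by
    obtain ⟨s, hs⟩ := hev.exists
    exact ((le_add_right le_rfl).trans_lt hs).ne_top
  have h2 : Filter.limsup f l ≤ b - c :=
    Filter.limsup_le_of_le (by isBoundedDefault)
      (hev.mono fun s hs => ENNReal.le_sub_of_add_le_left hc hs.le)
  calc c + Filter.limsup f l ≤ c + (b - c) := add_le_add le_rfl h2
    _ = b := add_tsub_cancel_of_le hcb

end Lemmas2

/-- Right jump formula: v⁺(t+0) = v⁺(t) + limsup_{T ∋ s → t+0} e(F(t),F(s)). -/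
theorem varPlus_right_jump {M : Type*} [MetricSpace M]
    (T : Set ℝ) (F : ℝ → Set M)
    (hF : ∀ t ∈ T, (F t).Nonempty ∧ IsCompact (F t))
    (hV : varPlus F T < ⊤) (t : ℝ) (ht : t ∈ T)
    (hright : ∀ ε > 0, (T ∩ Set.Ioo t (t + ε)).Nonempty) :
    Filter.limsup (fun s => varPlus F (T ∩ Set.Iic s)) (nhdsWithin t (T ∩ Set.Ioi t)) =
      varPlus F (T ∩ Set.Iic t) +
      Filter.limsup (fun s => exc (F t) (F s)) (nhdsWithin t (T ∩ Set.Ioi t)) := by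
  set l := nhdsWithin t (T ∩ Set.Ioi t) with hl
  have hlne : l.NeBot := by
    rw [hl, ← mem_closure_iff_nhdsWithin_neBot, Metric.mem_closure_iff]
    intro ε hε
    obtain ⟨s, hsT, hs1, hs2⟩ := hright ε hε
    refine ⟨s, ⟨hsT, hs1⟩, ?_⟩
    rw [Real.dist_eq, abs_sub_comm, abs_of_pos (by linarith)]
    linarith
  set v : ℝ → ℝ≥0∞ := fun s => varPlus F (T ∩ Set.Iic s) with hv
  set e : ℝ → ℝ≥0∞ := fun s => exc (F t) (F s) with he
  have hvmono : Monotone v := fun a b hab =>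
    varPlus_mono (inter_subset_inter_right _ (Iic_subset_Iic.2 hab))
  have hvle : ∀ s, v s ≤ varPlus F T := fun s => varPlus_mono inter_subset_left
  -- key pointwise inequality : v t + e s ≤ v s for s ∈ T ∩ Ioi t
  have hkey : ∀ s ∈ T ∩ Set.Ioi t, v t + e s ≤ v s := by
    intro s hs
    have hts : t ≤ s := hs.2.le
    set f : ℕ → ℝ := fun i => if i = 0 then t else s with hf
    have hfmono : Monotone f := by
      intro a b hab
      by_cases ha : a = 0 <;> by_cases hb : b = 0 <;>
        simp only [hf, ha, hb, if_pos, if_neg, if_true, if_false, le_refl]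
      · exact hts
      · omega
    have hfmem : ∀ i, f i ∈ T := by
      intro i
      by_cases hi : i = 0 <;> simp only [hf, hi, if_pos, if_neg, if_true, if_false]
      exacts [ht, hs.1]
    have h1 := varPlus_prepend (F := F) hfmono hfmem 1
    simp only [Finset.sum_range_one, hf, if_pos rfl, if_neg one_ne_zero, reduceIte] at h1
    exact h1
  -- limsup v ≤ v s for every s ∈ T ∩ Ioi t
  have hmemv : ∀ s ∈ T ∩ Set.Ioi t, Filter.limsup v l ≤ v s := by
    intro s hs
    refine Filter.limsup_le_of_le (by isBoundedDefault) ?_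
    have h2 : Set.Iio s ∈ l := nhdsWithin_le_nhds (Iio_mem_nhds hs.2)
    filter_upwards [h2] with x hx using hvmono hx.le
  -- lower bound
  have hlow : v t + Filter.limsup e l ≤ Filter.limsup v l := by
    refine (add_limsup_le_limsup_add _ _).trans (Filter.limsup_le_limsup ?_)
    filter_upwards [self_mem_nhdsWithin] with s hs using hkey s hs
  -- upper bound
  have hupp : Filter.limsup v l ≤ v t + Filter.limsup e l := by
    set L := Filter.limsup e l with hL
    by_cases hLtop : L = ⊤
    · rw [hLtop, add_top]
      exact le_top
    have hR : Filter.limsup v l ≠ ⊤ :=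
      ne_top_of_le_ne_top hV.ne
        (Filter.limsup_le_of_le (by isBoundedDefault) (Eventually.of_forall hvle))
    refine ENNReal.le_of_forall_pos_le_add fun δ hδ hfin => ?_
    have hδ2 : ((δ : ℝ≥0∞) / 2) ≠ 0 := by
      simp [ENNReal.div_eq_zero_iff, hδ.ne']
    have he1 : ∀ᶠ s in l, e s < L + (δ : ℝ≥0∞) / 2 :=
      Filter.eventually_lt_of_limsup_lt (ENNReal.lt_add_right hLtop hδ2)
    have he2 : ∀ᶠ s in l, v s < Filter.limsup v l + (δ : ℝ≥0∞) / 2 :=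
      Filter.eventually_lt_of_limsup_lt (ENNReal.lt_add_right hR hδ2)
    obtain ⟨ε, hε, hsub⟩ := Metric.mem_nhdsWithin_iff.1 ((he1.and he2) : _)
    obtain ⟨u, huT, hu1, hu2⟩ := hright ε hε
    have hu' : ∀ s ∈ T ∩ Set.Ioc t u,
        e s < L + (δ : ℝ≥0∞) / 2 ∧ v s < Filter.limsup v l + (δ : ℝ≥0∞) / 2 := by
      intro s hs
      refine hsub ⟨?_, hs.1, hs.2.1⟩
      rw [Metric.mem_ball, Real.dist_eq, abs_of_pos (by linarith [hs.2.1])]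
      linarith [hs.2.2]
    have hEbound : (⨆ s ∈ T ∩ Set.Ioc t u, exc (F t) (F s)) ≤ L + (δ : ℝ≥0∞) / 2 :=
      iSup₂_le fun s hs => (hu' s hs).1.le
    have hBbound : varPlus F (T ∩ Set.Ioc t u) ≤ (δ : ℝ≥0∞) / 2 := by
      rw [varPlus, varBy]
      refine iSup_le ?_
      rintro ⟨⟨n, f⟩, hf, hmem⟩
      dsimp only
      have h1 := varPlus_prepend (F := F) (T := T) hf (fun i => (hmem i).1) n
      have h2 : Filter.limsup v l + ∑ i ∈ Finset.range n, exc (F (f i)) (F (f (i + 1)))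
          ≤ Filter.limsup v l + (δ : ℝ≥0∞) / 2 := by
        calc Filter.limsup v l + ∑ i ∈ Finset.range n, exc (F (f i)) (F (f (i + 1)))
            ≤ v (f 0) + ∑ i ∈ Finset.range n, exc (F (f i)) (F (f (i + 1))) :=
              add_le_add_left (hmemv (f 0) ⟨(hmem 0).1, (hmem 0).2.1⟩) _
          _ ≤ v (f n) := h1
          _ ≤ Filter.limsup v l + (δ : ℝ≥0∞) / 2 := (hu' (f n) (hmem n)).2.le
      exact (ENNReal.add_le_add_iff_left hR).1 h2
    calc Filter.limsup v l ≤ v u := hmemv u ⟨huT, hu1⟩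
      _ ≤ v t + varPlus F (T ∩ Set.Icc t u) := varPlus_split ht hu1.le
      _ ≤ v t + ((L + (δ : ℝ≥0∞) / 2) + (δ : ℝ≥0∞) / 2) := by
          refine add_le_add_right ((varPlus_icc_split).trans (add_le_add hEbound hBbound)) _
      _ = v t + L + (δ : ℝ≥0∞) := by
          rw [add_assoc (L), ENNReal.add_halves, add_assoc]
  exact le_antisymm hupp hlow
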